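/- arXiv:1102.1191 — 3 statements merged into one kernel-verified Lean document; each statement's English description precedes it below -/
import Mathlib

section
/- Let F and F* be distribution functions on ℝ of probability measures with equal (finite) second moments and equal first moments, and define G(s) = ∫_{-∞}^s F(t) dt and G*(s) = ∫_{-∞}^s F*(t) dt. If G(s) ≥ G*(s) for all s ∈ ℝ, then G = G* and hence F = F*. -/
open MeasureTheory Set ENNReal

lemma meas_mIic (μ : Measure ℝ) : Measurable fun t => μ (Iic t) := by
  have : Monotone fun t => μ (Iic t) := fun a b hab => measure_mono (Iic_subset_Iic.2 hab)
  exact this.measurable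

lemma lemA' (μ : Measure ℝ) [IsProbabilityMeasure μ] (s : ℝ) :
    ∫⁻ t in Iic s, μ (Iic t) = ∫⁻ x, ENNReal.ofReal (s - x) ∂μ := by
  have hmeas : Measurable fun p : ℝ × ℝ => ({q : ℝ × ℝ | q.2 ≤ q.1}.indicator (fun _ => (1:ℝ≥0∞))) p :=
    measurable_const.indicator (measurableSet_le measurable_snd measurable_fst)
  calc ∫⁻ t in Iic s, μ (Iic t)
      = ∫⁻ t in Iic s, ∫⁻ x, ({q : ℝ × ℝ | q.2 ≤ q.1}.indicator (fun _ => (1:ℝ≥0∞))) (t, x) ∂μ := by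
        refine setLIntegral_congr_fun measurableSet_Iic (fun t _ => ?_)
        rw [← lintegral_indicator_one (measurableSet_Iic : MeasurableSet (Iic t))]
        refine lintegral_congr fun x => ?_
        simp [Set.indicator_apply]
    _ = ∫⁻ x, ∫⁻ t in Iic s, ({q : ℝ × ℝ | q.2 ≤ q.1}.indicator (fun _ => (1:ℝ≥0∞))) (t, x) ∂volume ∂μ :=
        lintegral_lintegral_swap hmeas.aemeasurable
    _ = ∫⁻ x, ENNReal.ofReal (s - x) ∂μ := by
        refine lintegral_congr fun x => ?_
        have h1 : (fun t => ({q : ℝ × ℝ | q.2 ≤ q.1}.indicator (fun _ => (1:ℝ≥0∞))) (t, x))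
            = (Ici x).indicator (1 : ℝ → ℝ≥0∞) := by
          ext t; simp [Set.indicator_apply]
        rw [h1, lintegral_indicator_one measurableSet_Ici,
          Measure.restrict_apply measurableSet_Ici, Ici_inter_Iic, Real.volume_Icc]

lemma int_id (μ : Measure ℝ) [IsProbabilityMeasure μ] (h2 : Integrable (fun x => x ^ 2) μ) :
    Integrable (fun x : ℝ => x) μ := by
  refine (h2.add (integrable_const 1)).mono' (measurable_id.aestronglyMeasurable) ?_
  refine Filter.Eventually.of_forall fun x => ?_
  simp only [Pi.add_apply, Real.norm_eq_abs]
  rcases le_total (|x|) 1 with h | h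
  · nlinarith [sq_abs x, abs_nonneg x]
  · nlinarith [sq_abs x, abs_nonneg x]

lemma int_max_left (μ : Measure ℝ) [IsProbabilityMeasure μ] (h2 : Integrable (fun x => x ^ 2) μ)
    (s : ℝ) : Integrable (fun x : ℝ => max (s - x) 0) μ := by
  refine (((int_id μ h2).abs.add (integrable_const |s|))).mono'
    ((continuous_const.sub continuous_id).max continuous_const).aestronglyMeasurable ?_
  refine Filter.Eventually.of_forall fun x => ?_
  simp only [Pi.add_apply, Real.norm_eq_abs]
  rw [abs_of_nonneg (le_max_right _ _)]
  have h1 := le_abs_self s; have h2' := neg_abs_le x; have h3 := abs_nonneg x; have h4 := abs_nonneg s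
  rcases le_total (s - x) 0 with h | h
  · rw [max_eq_right h]; linarith
  · rw [max_eq_left h]; linarith

lemma int_max_right (μ : Measure ℝ) [IsProbabilityMeasure μ] (h2 : Integrable (fun x => x ^ 2) μ)
    (s : ℝ) : Integrable (fun x : ℝ => max (x - s) 0) μ := by
  refine (((int_id μ h2).abs.add (integrable_const |s|))).mono'
    ((continuous_id.sub continuous_const).max continuous_const).aestronglyMeasurable ?_
  refine Filter.Eventually.of_forall fun x => ?_
  simp only [Pi.add_apply, Real.norm_eq_abs]
  rw [abs_of_nonneg (le_max_right _ _)]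
  have h1 := neg_abs_le s; have h2' := le_abs_self x; have h3 := abs_nonneg x; have h4 := abs_nonneg s
  rcases le_total (x - s) 0 with h | h
  · rw [max_eq_right h]; linarith
  · rw [max_eq_left h]; linarith

lemma ofReal_max0 (a : ℝ) : ENNReal.ofReal (max a 0) = ENNReal.ofReal a := by
  rcases le_total a 0 with h | h
  · rw [max_eq_right h, ENNReal.ofReal_zero, eq_comm, ENNReal.ofReal_eq_zero]; exact h
  · rw [max_eq_left h]

lemma ofReal_int_left (μ : Measure ℝ) [IsProbabilityMeasure μ]
    (h2 : Integrable (fun x => x ^ 2) μ) (s : ℝ) :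
    ENNReal.ofReal (∫ x, max (s - x) 0 ∂μ) = ∫⁻ x, ENNReal.ofReal (s - x) ∂μ := by
  rw [ofReal_integral_eq_lintegral_ofReal (int_max_left μ h2 s)
    (Filter.Eventually.of_forall fun x => le_max_right _ _)]
  exact lintegral_congr fun x => ofReal_max0 _

lemma ofReal_int_right (μ : Measure ℝ) [IsProbabilityMeasure μ]
    (h2 : Integrable (fun x => x ^ 2) μ) (s : ℝ) :
    ENNReal.ofReal (∫ x, max (x - s) 0 ∂μ) = ∫⁻ x, ENNReal.ofReal (x - s) ∂μ := by
  rw [ofReal_integral_eq_lintegral_ofReal (int_max_right μ h2 s)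
    (Filter.Eventually.of_forall fun x => le_max_right _ _)]
  exact lintegral_congr fun x => ofReal_max0 _

lemma lemA (μ : Measure ℝ) [IsProbabilityMeasure μ] (h2 : Integrable (fun x => x ^ 2) μ) (s : ℝ) :
    ∫ t in Iic s, (μ (Iic t)).toReal = ∫ x, max (s - x) 0 ∂μ := by
  rw [integral_eq_lintegral_of_nonneg_ae (Filter.Eventually.of_forall fun t => ENNReal.toReal_nonneg)
    ((ENNReal.measurable_toReal.comp (meas_mIic μ)).aestronglyMeasurable)]
  have h1 : ∫⁻ t in Iic s, ENNReal.ofReal ((μ (Iic t)).toReal) = ∫⁻ t in Iic s, μ (Iic t) :=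
    lintegral_congr fun t => ENNReal.ofReal_toReal (measure_ne_top μ _)
  rw [h1, lemA' μ s, ← ofReal_int_left μ h2 s]
  exact ENNReal.toReal_ofReal (integral_nonneg fun x => le_max_right _ _)

lemma lemB (μ : Measure ℝ) [IsProbabilityMeasure μ] (h2 : Integrable (fun x => x ^ 2) μ) (s : ℝ) :
    ∫ x, max (s - x) 0 ∂μ = s - (∫ x, x ∂μ) + ∫ x, max (x - s) 0 ∂μ := by
  have key : (fun x : ℝ => max (s - x) 0) = fun x => (s - x) + max (x - s) 0 := by
    ext x
    rcases le_total (s - x) 0 with h | h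
    · rw [max_eq_right h, max_eq_left (by linarith)]; ring
    · rw [max_eq_left h, max_eq_right (by linarith)]; ring
  have hf : Integrable (fun x : ℝ => s - x) μ := (integrable_const s).sub (int_id μ h2)
  rw [key, integral_add hf (int_max_right μ h2 s), integral_sub (integrable_const s) (int_id μ h2),
    integral_const]
  simp

lemma cont_max_right (μ : Measure ℝ) [IsProbabilityMeasure μ]
    (h2 : Integrable (fun x => x ^ 2) μ) :
    Continuous fun s => ∫ x, max (x - s) 0 ∂μ := by
  have : LipschitzWith 1 fun s => ∫ x, max (x - s) 0 ∂μ := by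
    refine LipschitzWith.of_dist_le_mul fun a b => ?_
    rw [Real.dist_eq, Real.dist_eq, NNReal.coe_one, one_mul,
      ← integral_sub (int_max_right μ h2 a) (int_max_right μ h2 b)]
    calc |∫ x, (max (x - a) 0 - max (x - b) 0) ∂μ| ≤ ∫ x, |max (x - a) 0 - max (x - b) 0| ∂μ := by
          simpa [Real.norm_eq_abs] using
            norm_integral_le_integral_norm (μ := μ) (fun x => max (x - a) 0 - max (x - b) 0)
      _ ≤ ∫ _, |a - b| ∂μ := by
          refine integral_mono ((int_max_right μ h2 a).sub (int_max_right μ h2 b)).abs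
            (integrable_const _) fun x => ?_
          calc |max (x - a) 0 - max (x - b) 0| ≤ |(x - a) - (x - b)| := abs_max_sub_max_le_abs _ _ _
            _ = |a - b| := by rw [abs_sub_comm]; ring_nf
      _ = |a - b| := by rw [integral_const]; simp
  exact this.continuous

lemma cont_max_left (μ : Measure ℝ) [IsProbabilityMeasure μ]
    (h2 : Integrable (fun x => x ^ 2) μ) :
    Continuous fun s => ∫ x, max (s - x) 0 ∂μ := by
  have : (fun s => ∫ x, max (s - x) 0 ∂μ) = fun s => s - (∫ x, x ∂μ) + ∫ x, max (x - s) 0 ∂μ := by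
    ext s; exact lemB μ h2 s
  rw [this]
  exact ((continuous_id.sub continuous_const).add (cont_max_right μ h2))

lemma inner_left (x : ℝ) :
    ∫⁻ s in Iic (0:ℝ), ENNReal.ofReal (s - x) = ENNReal.ofReal ((min x 0) ^ 2 / 2) := by
  rcases le_or_gt x 0 with hx | hx
  · rw [min_eq_left hx, ← Iic_union_Ioc_eq_Iic hx,
      lintegral_union measurableSet_Ioc (Iic_disjoint_Ioc le_rfl)]
    have hz : ∫⁻ s in Iic x, ENNReal.ofReal (s - x) = 0 := by
      rw [← lintegral_zero (μ := volume.restrict (Iic x))]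
      refine setLIntegral_congr_fun measurableSet_Iic (fun s hs => ?_)
      rw [ENNReal.ofReal_eq_zero]; simp only [mem_Iic] at hs; linarith
    rw [hz, zero_add]
    have hint : IntegrableOn (fun s : ℝ => s - x) (Ioc x 0) volume :=
      ((intervalIntegral.intervalIntegrable_id.sub intervalIntegrable_const) :
        IntervalIntegrable (fun s : ℝ => s - x) volume x 0).1
    rw [← ofReal_integral_eq_lintegral_ofReal hint
      ((ae_restrict_iff' measurableSet_Ioc).2 (Filter.Eventually.of_forall fun s hs => by
        simp only [mem_Ioc] at hs; simp only [Pi.zero_apply]; linarith [hs.1]))]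
    congr 1
    rw [← intervalIntegral.integral_of_le hx,
      intervalIntegral.integral_sub intervalIntegral.intervalIntegrable_id intervalIntegrable_const,
      integral_id, intervalIntegral.integral_const]
    simp only [smul_eq_mul, sub_zero, zero_sub, zero_pow, sub_self]; ring
  · have h1 : ∫⁻ s in Iic (0:ℝ), ENNReal.ofReal (s - x) = 0 := by
      rw [← lintegral_zero (μ := volume.restrict (Iic (0:ℝ)))]
      refine setLIntegral_congr_fun measurableSet_Iic (fun s hs => ?_)
      rw [ENNReal.ofReal_eq_zero]; simp only [mem_Iic] at hs; linarith
    rw [h1, min_eq_right hx.le]; norm_num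

lemma inner_right (x : ℝ) :
    ∫⁻ s in Ioi (0:ℝ), ENNReal.ofReal (x - s) = ENNReal.ofReal ((max x 0) ^ 2 / 2) := by
  rcases le_or_gt x 0 with hx | hx
  · have h1 : ∫⁻ s in Ioi (0:ℝ), ENNReal.ofReal (x - s) = 0 := by
      rw [← lintegral_zero (μ := volume.restrict (Ioi (0:ℝ)))]
      refine setLIntegral_congr_fun measurableSet_Ioi (fun s hs => ?_)
      rw [ENNReal.ofReal_eq_zero]; simp only [mem_Ioi] at hs; linarith
    rw [h1, max_eq_right hx]; norm_num
  · rw [max_eq_left hx.le, ← Ioc_union_Ioi_eq_Ioi hx.le,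
      lintegral_union measurableSet_Ioi (Ioc_disjoint_Ioi le_rfl)]
    have hz : ∫⁻ s in Ioi x, ENNReal.ofReal (x - s) = 0 := by
      rw [← lintegral_zero (μ := volume.restrict (Ioi x))]
      refine setLIntegral_congr_fun measurableSet_Ioi (fun s hs => ?_)
      rw [ENNReal.ofReal_eq_zero]; simp only [mem_Ioi] at hs; linarith
    rw [hz, add_zero]
    have hint : IntegrableOn (fun s : ℝ => x - s) (Ioc 0 x) volume :=
      ((intervalIntegrable_const.sub intervalIntegral.intervalIntegrable_id) :
        IntervalIntegrable (fun s : ℝ => x - s) volume 0 x).1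
    rw [← ofReal_integral_eq_lintegral_ofReal hint
      ((ae_restrict_iff' measurableSet_Ioc).2 (Filter.Eventually.of_forall fun s hs => by
        simp only [mem_Ioc] at hs; simp only [Pi.zero_apply]; linarith [hs.2]))]
    congr 1
    rw [← intervalIntegral.integral_of_le hx.le,
      intervalIntegral.integral_sub intervalIntegrable_const intervalIntegral.intervalIntegrable_id,
      integral_id, intervalIntegral.integral_const]
    simp only [smul_eq_mul, sub_zero, zero_sub, zero_pow, sub_self]; ring

lemma int_min_sq (μ : Measure ℝ) [IsProbabilityMeasure μ] (h2 : Integrable (fun x => x ^ 2) μ) :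
    Integrable (fun x : ℝ => (min x 0) ^ 2 / 2) μ := by
  refine h2.mono' (((continuous_id.min continuous_const).pow 2).div_const 2).aestronglyMeasurable
    (Filter.Eventually.of_forall fun x => ?_)
  simp only [Real.norm_eq_abs]
  rcases le_total x 0 with h | h
  · rw [min_eq_left h, abs_of_nonneg (by positivity)]; nlinarith
  · rw [min_eq_right h, abs_of_nonneg (by positivity)]; nlinarith

lemma int_max_sq (μ : Measure ℝ) [IsProbabilityMeasure μ] (h2 : Integrable (fun x => x ^ 2) μ) :
    Integrable (fun x : ℝ => (max x 0) ^ 2 / 2) μ := by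
  refine h2.mono' (((continuous_id.max continuous_const).pow 2).div_const 2).aestronglyMeasurable
    (Filter.Eventually.of_forall fun x => ?_)
  simp only [Real.norm_eq_abs]
  rcases le_total x 0 with h | h
  · rw [max_eq_right h, abs_of_nonneg (by positivity)]; nlinarith
  · rw [max_eq_left h, abs_of_nonneg (by positivity)]; nlinarith

lemma lemC (μ : Measure ℝ) [IsProbabilityMeasure μ] (h2 : Integrable (fun x => x ^ 2) μ) :
    ∫⁻ s in Iic (0:ℝ), ∫⁻ x, ENNReal.ofReal (s - x) ∂μ
      = ENNReal.ofReal (∫ x, (min x 0) ^ 2 / 2 ∂μ) := by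
  have hswap := lintegral_lintegral_swap (μ := volume.restrict (Iic (0:ℝ))) (ν := μ)
    (f := fun s x => ENNReal.ofReal (s - x))
    ((measurable_fst.sub measurable_snd).ennreal_ofReal).aemeasurable
  rw [hswap]
  rw [ofReal_integral_eq_lintegral_ofReal (int_min_sq μ h2)
    (Filter.Eventually.of_forall fun x => by positivity)]
  exact lintegral_congr fun x => inner_left x

lemma lemD (μ : Measure ℝ) [IsProbabilityMeasure μ] (h2 : Integrable (fun x => x ^ 2) μ) :
    ∫⁻ s in Ioi (0:ℝ), ∫⁻ x, ENNReal.ofReal (x - s) ∂μ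
      = ENNReal.ofReal (∫ x, (max x 0) ^ 2 / 2 ∂μ) := by
  have hswap := lintegral_lintegral_swap (μ := volume.restrict (Ioi (0:ℝ))) (ν := μ)
    (f := fun s x => ENNReal.ofReal (x - s))
    ((measurable_snd.sub measurable_fst).ennreal_ofReal).aemeasurable
  rw [hswap]
  rw [ofReal_integral_eq_lintegral_ofReal (int_max_sq μ h2)
    (Filter.Eventually.of_forall fun x => by positivity)]
  exact lintegral_congr fun x => inner_right x

lemma zero_of_ae (w : ℝ → ℝ) (hw : Continuous w)
    (ha : ∀ᵐ s ∂(volume.restrict (Iic (0:ℝ))), w s = 0)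
    (hb : ∀ᵐ s ∂(volume.restrict (Ioi (0:ℝ))), w s = 0) : ∀ s, w s = 0 := by
  have hvol : (volume : Measure ℝ) = volume.restrict (Iic 0) + volume.restrict (Ioi 0) := by
    rw [← Measure.restrict_union (Iic_disjoint_Ioi le_rfl) measurableSet_Ioi, Iic_union_Ioi,
      Measure.restrict_univ]
  have hae : w =ᵐ[volume] (fun _ => 0) := by
    rw [Filter.EventuallyEq, hvol, ae_add_measure_iff]
    exact ⟨ha, hb⟩
  have heq := (Continuous.ae_eq_iff_eq volume hw continuous_const).1 hae
  exact fun s => congrFun heq s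

lemma cdf_le_cdf (μ ν : Measure ℝ) [IsProbabilityMeasure μ] [IsProbabilityMeasure ν]
    (h2 : Integrable (fun x => x ^ 2) μ) (h2ν : Integrable (fun x => x ^ 2) ν)
    (heq : ∀ s, ∫ t in Iic s, (μ (Iic t)).toReal = ∫ t in Iic s, (ν (Iic t)).toReal)
    (s : ℝ) : (μ (Iic s)).toReal ≤ (ν (Iic s)).toReal := by
  set F : ℝ → ℝ := fun t => (μ (Iic t)).toReal with hFdef
  set Fs : ℝ → ℝ := fun t => (ν (Iic t)).toReal with hFsdef
  have FintOn : ∀ (m : Measure ℝ) [IsProbabilityMeasure m],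
      Integrable (fun x => x ^ 2) m → ∀ s' : ℝ,
      IntegrableOn (fun t => (m (Iic t)).toReal) (Iic s') volume := by
    intro m _ h2m s'
    refine ⟨(ENNReal.measurable_toReal.comp (meas_mIic m)).aestronglyMeasurable, ?_⟩
    rw [HasFiniteIntegral]
    have : ∫⁻ t in Iic s', ‖(m (Iic t)).toReal‖ₑ = ∫⁻ t in Iic s', m (Iic t) := by
      refine lintegral_congr fun t => ?_
      rw [Real.enorm_eq_ofReal ENNReal.toReal_nonneg, ENNReal.ofReal_toReal (measure_ne_top m _)]
    rw [this, lemA' m s', ← ofReal_int_left m h2m s']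
    exact ENNReal.ofReal_lt_top
  -- for s' > s : F s ≤ Fs s'
  have key : ∀ s' : ℝ, s < s' → F s ≤ Fs s' := by
    intro s' hss'
    have hsplit : ∀ (m : Measure ℝ) [IsProbabilityMeasure m], Integrable (fun x => x ^ 2) m →
        ∫ t in Iic s', (m (Iic t)).toReal
          = (∫ t in Iic s, (m (Iic t)).toReal) + ∫ t in Ioc s s', (m (Iic t)).toReal := by
      intro m _ h2m
      rw [← setIntegral_union (Iic_disjoint_Ioc le_rfl) measurableSet_Ioc
        ((FintOn m h2m s).mono_set Subset.rfl)
        ((FintOn m h2m s').mono_set Ioc_subset_Iic_self), Iic_union_Ioc_eq_Iic hss'.le]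
    have hIoc : ∫ t in Ioc s s', F t = ∫ t in Ioc s s', Fs t := by
      have h1 := hsplit μ h2
      have h2' := hsplit ν h2ν
      have h3 := heq s
      have h4 := heq s'
      simp only [← hFdef, ← hFsdef] at h1 h2' h3 h4
      linarith
    have hmono : Monotone F := fun a b hab =>
      ENNReal.toReal_mono (measure_ne_top μ _) (measure_mono (Iic_subset_Iic.2 hab))
    have hmonos : Monotone Fs := fun a b hab =>
      ENNReal.toReal_mono (measure_ne_top ν _) (measure_mono (Iic_subset_Iic.2 hab))
    have hvol : (volume (Ioc s s')).toReal = s' - s := by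
      rw [Real.volume_Ioc, ENNReal.toReal_ofReal (by linarith)]
    have hlow : F s * (s' - s) ≤ ∫ t in Ioc s s', F t := by
      have := setIntegral_mono_on
        (integrableOn_const (C := F s) (s := Ioc s s') (μ := volume) (by rw [Real.volume_Ioc]; exact ENNReal.ofReal_ne_top))
        ((FintOn μ h2 s').mono_set Ioc_subset_Iic_self) measurableSet_Ioc
        (fun t ht => hmono ht.1.le)
      rwa [setIntegral_const, measureReal_def, hvol, smul_eq_mul, mul_comm] at this
    have hupp : ∫ t in Ioc s s', Fs t ≤ Fs s' * (s' - s) := by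
      have := setIntegral_mono_on
        ((FintOn ν h2ν s').mono_set (Ioc_subset_Iic_self (a := s)))
        (integrableOn_const (C := Fs s') (s := Ioc s s') (μ := volume) (by rw [Real.volume_Ioc]; exact ENNReal.ofReal_ne_top))
        measurableSet_Ioc (fun t ht => hmonos ht.2)
      rwa [setIntegral_const, measureReal_def, hvol, smul_eq_mul, mul_comm] at this
    have : F s * (s' - s) ≤ Fs s' * (s' - s) := by rw [← hIoc] at hupp; linarith
    exact le_of_mul_le_mul_right this (by linarith)
  have hFs_cdf : Fs = fun t => ProbabilityTheory.cdf ν t := by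
    funext t; rw [hFsdef]; exact (ProbabilityTheory.cdf_eq_real ν t).symm
  have htd : Filter.Tendsto Fs (nhdsWithin s (Ioi s)) (nhds (Fs s)) := by
    rw [hFs_cdf]
    exact ((ProbabilityTheory.cdf ν).right_continuous s).mono Ioi_subset_Ici_self
  show F s ≤ Fs s
  exact ge_of_tendsto htd (eventually_nhdsWithin_of_forall fun s' hs' => key s' hs')

theorem cdf_integral_domination_implies_equal
    (μ μs : Measure ℝ) [IsProbabilityMeasure μ] [IsProbabilityMeasure μs]
    (h2 : Integrable (fun x => x ^ 2) μ) (h2s : Integrable (fun x => x ^ 2) μs)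
    (hmean : ∫ x, x ∂μ = ∫ x, x ∂μs)
    (hsecond : ∫ x, x ^ 2 ∂μ = ∫ x, x ^ 2 ∂μs)
    (F : ℝ → ℝ) (Fs : ℝ → ℝ)
    (hF : ∀ t, F t = (μ (Iic t)).toReal)
    (hFs : ∀ t, Fs t = (μs (Iic t)).toReal)
    (G : ℝ → ℝ) (Gs : ℝ → ℝ)
    (hG : ∀ s, G s = ∫ t in Iic s, F t)
    (hGs : ∀ s, Gs s = ∫ t in Iic s, Fs t)
    (hdom : ∀ s, Gs s ≤ G s) :
    G = Gs ∧ F = Fs := by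
  -- G in terms of max integrals
  have hGmax : ∀ s, G s = ∫ x, max (s - x) 0 ∂μ := by
    intro s; rw [hG s]
    have h := lemA μ h2 s
    simp only [← hF] at h; exact h
  have hGsmax : ∀ s, Gs s = ∫ x, max (s - x) 0 ∂μs := by
    intro s; rw [hGs s]
    have h := lemA μs h2s s
    simp only [← hFs] at h; exact h
  have contG : Continuous G := by
    have : G = fun s => ∫ x, max (s - x) 0 ∂μ := funext hGmax
    rw [this]; exact cont_max_left μ h2
  have contGs : Continuous Gs := by
    have : Gs = fun s => ∫ x, max (s - x) 0 ∂μs := funext hGsmax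
    rw [this]; exact cont_max_left μs h2s
  set P : ℝ → ℝ := fun s => ∫ x, max (x - s) 0 ∂μ with hP
  set Ps : ℝ → ℝ := fun s => ∫ x, max (x - s) 0 ∂μs with hPs
  have hGP : ∀ s, G s = s - (∫ x, x ∂μ) + P s := fun s => by rw [hGmax s, lemB μ h2 s]
  have hGsP : ∀ s, Gs s = s - (∫ x, x ∂μ) + Ps s := fun s => by
    rw [hGsmax s, lemB μs h2s s, hmean]
  have wdef : ∀ s, G s - Gs s = P s - Ps s := fun s => by rw [hGP s, hGsP s]; ring
  have hPnn : ∀ s, 0 ≤ Ps s := fun s => integral_nonneg fun x => le_max_right _ _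
  have hGsnn : ∀ s, 0 ≤ Gs s := fun s => by
    rw [hGsmax s]; exact integral_nonneg fun x => le_max_right _ _
  have hGnn : ∀ s, 0 ≤ G s := fun s => by
    rw [hGmax s]; exact integral_nonneg fun x => le_max_right _ _
  have hPle : ∀ s, Ps s ≤ P s := fun s => by have h := hdom s; have h2 := wdef s; linarith
  -- ofReal identities
  have hGof : ∀ s, ENNReal.ofReal (G s) = ∫⁻ x, ENNReal.ofReal (s - x) ∂μ := fun s => by
    rw [hGmax s]; exact ofReal_int_left μ h2 s
  have hGsof : ∀ s, ENNReal.ofReal (Gs s) = ∫⁻ x, ENNReal.ofReal (s - x) ∂μs := fun s => by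
    rw [hGsmax s]; exact ofReal_int_left μs h2s s
  have hPof : ∀ s, ENNReal.ofReal (P s) = ∫⁻ x, ENNReal.ofReal (x - s) ∂μ := fun s =>
    ofReal_int_right μ h2 s
  have hPsof : ∀ s, ENNReal.ofReal (Ps s) = ∫⁻ x, ENNReal.ofReal (x - s) ∂μs := fun s =>
    ofReal_int_right μs h2s s
  set a := ∫ x, (min x 0) ^ 2 / 2 ∂μ with ha
  set as := ∫ x, (min x 0) ^ 2 / 2 ∂μs with has
  set b := ∫ x, (max x 0) ^ 2 / 2 ∂μ with hb
  set bs := ∫ x, (max x 0) ^ 2 / 2 ∂μs with hbs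
  have hA : ∫⁻ s in Iic (0:ℝ), ENNReal.ofReal (G s) = ENNReal.ofReal a := by
    rw [lintegral_congr hGof]; exact lemC μ h2
  have hAs : ∫⁻ s in Iic (0:ℝ), ENNReal.ofReal (Gs s) = ENNReal.ofReal as := by
    rw [lintegral_congr hGsof]; exact lemC μs h2s
  have hB : ∫⁻ s in Ioi (0:ℝ), ENNReal.ofReal (P s) = ENNReal.ofReal b := by
    rw [lintegral_congr hPof]; exact lemD μ h2
  have hBs : ∫⁻ s in Ioi (0:ℝ), ENNReal.ofReal (Ps s) = ENNReal.ofReal bs := by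
    rw [lintegral_congr hPsof]; exact lemD μs h2s
  have hann : 0 ≤ a := integral_nonneg fun x => by positivity
  have hasnn : 0 ≤ as := integral_nonneg fun x => by positivity
  have hbnn : 0 ≤ b := integral_nonneg fun x => by positivity
  have hbsnn : 0 ≤ bs := integral_nonneg fun x => by positivity
  have hasle : as ≤ a := by
    rw [← ENNReal.ofReal_le_ofReal_iff hann, ← hA, ← hAs]
    exact lintegral_mono fun s => ENNReal.ofReal_le_ofReal (hdom s)
  have hbsle : bs ≤ b := by
    rw [← ENNReal.ofReal_le_ofReal_iff hbnn, ← hB, ← hBs]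
    exact lintegral_mono fun s => ENNReal.ofReal_le_ofReal (hPle s)
  -- sums
  have hsum : ∀ (m : Measure ℝ) [IsProbabilityMeasure m], Integrable (fun x => x ^ 2) m →
      (∫ x, (min x 0) ^ 2 / 2 ∂m) + (∫ x, (max x 0) ^ 2 / 2 ∂m) = (∫ x, x ^ 2 ∂m) / 2 := by
    intro m _ h2m
    rw [← integral_add (int_min_sq m h2m) (int_max_sq m h2m), ← integral_div]
    refine integral_congr_ae (Filter.Eventually.of_forall fun x => ?_)
    simp only [Pi.add_apply]
    rcases le_total x 0 with h | h
    · rw [min_eq_left h, max_eq_right h]; ring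
    · rw [min_eq_right h, max_eq_left h]; ring
  have hsum1 := hsum μ h2
  have hsum2 := hsum μs h2s
  have haeq : a = as := by
    simp only [← ha, ← hb, ← has, ← hbs, hsecond] at hsum1 hsum2; linarith
  have hbeq : b = bs := by
    simp only [← ha, ← hb, ← has, ← hbs, hsecond] at hsum1 hsum2; linarith
  -- a.e. vanishing on each half line
  have haeIic : ∀ᵐ s ∂(volume.restrict (Iic (0:ℝ))), G s - Gs s = 0 := by
    have hgm : Measurable fun s => ENNReal.ofReal (Gs s) := contGs.measurable.ennreal_ofReal
    have hfm : Measurable fun s => ENNReal.ofReal (G s) := contG.measurable.ennreal_ofReal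
    have hfin : ∫⁻ s in Iic (0:ℝ), ENNReal.ofReal (Gs s) ≠ ⊤ := by
      rw [hAs]; exact ENNReal.ofReal_ne_top
    have hle : (fun s => ENNReal.ofReal (Gs s)) ≤ᵐ[volume.restrict (Iic (0:ℝ))]
        fun s => ENNReal.ofReal (G s) :=
      Filter.Eventually.of_forall fun s => ENNReal.ofReal_le_ofReal (hdom s)
    have hsub : ∫⁻ s in Iic (0:ℝ), (ENNReal.ofReal (G s) - ENNReal.ofReal (Gs s)) = 0 := by
      rw [lintegral_sub hgm hfin hle, hA, hAs, haeq, tsub_self]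
    have := (lintegral_eq_zero_iff (hfm.sub hgm)).1 hsub
    filter_upwards [this] with s hs
    simp only [Pi.zero_apply] at hs
    have hle' : ENNReal.ofReal (G s) ≤ ENNReal.ofReal (Gs s) := tsub_eq_zero_iff_le.1 hs
    have := (ENNReal.ofReal_le_ofReal_iff (hGsnn s)).1 hle'
    linarith [hdom s]
  have haeIoi : ∀ᵐ s ∂(volume.restrict (Ioi (0:ℝ))), G s - Gs s = 0 := by
    have contP : Continuous P := cont_max_right μ h2
    have contPs : Continuous Ps := cont_max_right μs h2s
    have hgm : Measurable fun s => ENNReal.ofReal (Ps s) := contPs.measurable.ennreal_ofReal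
    have hfm : Measurable fun s => ENNReal.ofReal (P s) := contP.measurable.ennreal_ofReal
    have hfin : ∫⁻ s in Ioi (0:ℝ), ENNReal.ofReal (Ps s) ≠ ⊤ := by
      rw [hBs]; exact ENNReal.ofReal_ne_top
    have hle : (fun s => ENNReal.ofReal (Ps s)) ≤ᵐ[volume.restrict (Ioi (0:ℝ))]
        fun s => ENNReal.ofReal (P s) :=
      Filter.Eventually.of_forall fun s => ENNReal.ofReal_le_ofReal (hPle s)
    have hsub : ∫⁻ s in Ioi (0:ℝ), (ENNReal.ofReal (P s) - ENNReal.ofReal (Ps s)) = 0 := by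
      rw [lintegral_sub hgm hfin hle, hB, hBs, hbeq, tsub_self]
    have := (lintegral_eq_zero_iff (hfm.sub hgm)).1 hsub
    filter_upwards [this] with s hs
    simp only [Pi.zero_apply] at hs
    have hle' : ENNReal.ofReal (P s) ≤ ENNReal.ofReal (Ps s) := tsub_eq_zero_iff_le.1 hs
    have := (ENNReal.ofReal_le_ofReal_iff (hPnn s)).1 hle'
    have h3 := wdef s
    have h4 := hPle s
    linarith
  have hzero : ∀ s, G s - Gs s = 0 :=
    zero_of_ae (fun s => G s - Gs s) (contG.sub contGs) haeIic haeIoi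
  have hGeq : G = Gs := funext fun s => by linarith [hzero s]
  refine ⟨hGeq, ?_⟩
  -- F = Fs
  have heqint : ∀ s, ∫ t in Iic s, (μ (Iic t)).toReal = ∫ t in Iic s, (μs (Iic t)).toReal := by
    intro s
    have h1 := hG s; have h2' := hGs s
    have hFe : F = fun t => (μ (Iic t)).toReal := funext hF
    have hFse : Fs = fun t => (μs (Iic t)).toReal := funext hFs
    rw [hFe] at h1; rw [hFse] at h2'
    rw [← h1, ← h2', hGeq]
  funext t
  have h1 := cdf_le_cdf μ μs h2 h2s heqint t
  have h2' := cdf_le_cdf μs μ h2s h2 (fun s => (heqint s).symm) t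
  rw [hF t, hFs t]
  linarith
end

section
/- Let f̂ be a probability density supported on a set C, written on a piece C_j of a partition as f̂(x) = exp(b^T x - β), with the global bound f̂(x - y) ≤ exp(b^T (x-y) - β) for all y ∈ ℝ^d and x ∈ C_j. Let f̃ = f̂ ∗ N_d(0, A) with A positive semi-definite. Then for x ∈ C_j, (f̃(x) - f̂(x))/f̂(x) ≤ exp(b^T A b / 2) - 1. -/
open MeasureTheory Real Matrix

/-- The density of the `N_d(0, A)` Gaussian distribution. -/
noncomputable def gaussianDensity {d : ℕ} (A : Matrix (Fin d) (Fin d) ℝ)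
    (y : Fin d → ℝ) : ℝ :=
  (2 * π) ^ (-(d : ℝ) / 2) * A.det ^ (-(1 : ℝ) / 2) *
    Real.exp (-(y ⬝ᵥ A⁻¹.mulVec y) / 2)

namespace GaussAux

lemma integral_comp_mulVec {d : ℕ} (M : Matrix (Fin d) (Fin d) ℝ) (hM : M.det ≠ 0)
    (f : (Fin d → ℝ) → ℝ) :
    ∫ y, f y = |M.det| * ∫ z, f (M.mulVec z) := by
  haveI : Invertible M := M.invertibleOfIsUnitDet hM.isUnit
  let e : (Fin d → ℝ) ≃ₗ[ℝ] (Fin d → ℝ) := M.toLinearEquiv' ‹_›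
  let me : (Fin d → ℝ) ≃ᵐ (Fin d → ℝ) :=
    e.toContinuousLinearEquiv.toHomeomorph.toMeasurableEquiv
  have hme : ⇑me = M.mulVec := rfl
  have hmap : Measure.map (⇑me) volume = ENNReal.ofReal |M.det⁻¹| • volume := by
    rw [hme]
    exact Real.map_matrix_volume_pi_eq_smul_volume_pi hM
  have h1 : ∫ z, f (me z) = (ENNReal.ofReal |M.det⁻¹|).toReal • ∫ y, f y := by
    rw [← MeasureTheory.integral_map_equiv me f, hmap, integral_smul_measure]
  rw [hme] at h1
  rw [h1, ENNReal.toReal_ofReal (abs_nonneg _), smul_eq_mul, ← mul_assoc, abs_inv,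
    mul_inv_cancel₀ (abs_ne_zero.mpr hM), one_mul]

lemma integrable_of_comp_mulVec {d : ℕ} (M : Matrix (Fin d) (Fin d) ℝ) (hM : M.det ≠ 0)
    (f : (Fin d → ℝ) → ℝ) (h : Integrable (fun z => f (M.mulVec z))) : Integrable f := by
  haveI : Invertible M := M.invertibleOfIsUnitDet hM.isUnit
  let e : (Fin d → ℝ) ≃ₗ[ℝ] (Fin d → ℝ) := M.toLinearEquiv' ‹_›
  let me : (Fin d → ℝ) ≃ᵐ (Fin d → ℝ) :=
    e.toContinuousLinearEquiv.toHomeomorph.toMeasurableEquiv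
  have hme : ⇑me = M.mulVec := rfl
  have hmap : Measure.map (⇑me) volume = ENNReal.ofReal |M.det⁻¹| • volume := by
    rw [hme]; exact Real.map_matrix_volume_pi_eq_smul_volume_pi hM
  have h2 : Integrable f (Measure.map (⇑me) volume) := by
    rw [MeasureTheory.integrable_map_equiv me f]
    exact h
  rw [hmap] at h2
  have hc0 : ENNReal.ofReal |M.det⁻¹| ≠ 0 := by
    simp [ENNReal.ofReal_eq_zero, not_le, abs_pos, hM]
  exact (integrable_smul_measure hc0 ENNReal.ofReal_ne_top).mp h2

lemma gauss_1d : ∫ t : ℝ, Real.exp (-((1:ℝ)/2) * t ^ 2) = Real.sqrt (2 * π) := by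
  rw [integral_gaussian]
  rw [show π / ((1:ℝ)/2) = 2 * π by ring]

lemma std_eq_prod {d : ℕ} (z : Fin d → ℝ) :
    Real.exp (-(z ⬝ᵥ z) / 2) = ∏ i : Fin d, Real.exp (-((1:ℝ)/2) * (z i) ^ 2) := by
  rw [← Real.exp_sum, dotProduct]
  congr 1
  rw [neg_div, Finset.sum_div, ← Finset.sum_neg_distrib]
  congr 1 with i
  ring

lemma gauss_std_integral {d : ℕ} :
    ∫ z : Fin d → ℝ, Real.exp (-(z ⬝ᵥ z) / 2) = Real.sqrt (2 * π) ^ d := by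
  simp_rw [std_eq_prod]
  rw [MeasureTheory.volume_pi, MeasureTheory.integral_fintype_prod_eq_pow (ι := Fin d)
    (f := fun t : ℝ => Real.exp (-((1:ℝ)/2) * t ^ 2)), gauss_1d]
  simp

lemma gauss_std_integrable {d : ℕ} :
    Integrable (fun z : Fin d → ℝ => Real.exp (-(z ⬝ᵥ z) / 2)) := by
  simp_rw [std_eq_prod]
  exact Integrable.fintype_prod (fun i => integrable_exp_neg_mul_sq (by norm_num))

open scoped MatrixOrder in
noncomputable def _root_.Matrix.PosSemidef.sqrt {d : ℕ} {A : Matrix (Fin d) (Fin d) ℝ}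
    (_ : A.PosSemidef) : Matrix (Fin d) (Fin d) ℝ := CFC.sqrt A

open scoped MatrixOrder in
lemma _root_.Matrix.PosSemidef.sqrt_mul_self {d : ℕ} {A : Matrix (Fin d) (Fin d) ℝ}
    (h : A.PosSemidef) : h.sqrt * h.sqrt = A :=
  CFC.sqrt_mul_sqrt_self A h.nonneg

open scoped MatrixOrder in
lemma _root_.Matrix.PosSemidef.posSemidef_sqrt {d : ℕ} {A : Matrix (Fin d) (Fin d) ℝ}
    (h : A.PosSemidef) : h.sqrt.PosSemidef :=
  (CFC.sqrt_nonneg A).posSemidef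

section Main
variable {d : ℕ} {A : Matrix (Fin d) (Fin d) ℝ} (hA : A.PosDef) (hAsymm : A.IsSymm)

include hA hAsymm

lemma sqrt_quad (z : Fin d → ℝ) :
    (hA.posSemidef.sqrt.mulVec z) ⬝ᵥ A⁻¹.mulVec (hA.posSemidef.sqrt.mulVec z) = z ⬝ᵥ z := by
  set S := hA.posSemidef.sqrt with hS
  have hSS : S * S = A := hA.posSemidef.sqrt_mul_self
  have hSsym : Sᵀ = S := by
    have := hA.posSemidef.posSemidef_sqrt.isHermitian
    rwa [IsHermitian, conjTranspose_eq_transpose_of_trivial] at this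
  have hSdet : IsUnit S.det := by
    have h2 : S.det * S.det = A.det := by rw [← det_mul, hSS]
    have hd : S.det ≠ 0 := fun h => by simp [h] at h2; exact hA.det_pos.ne' h2.symm
    exact hd.isUnit
  have hAinv : A⁻¹ = S⁻¹ * S⁻¹ := by rw [← hSS, Matrix.mul_inv_rev]
  have key : A⁻¹.mulVec (S.mulVec z) = S⁻¹.mulVec z := by
    rw [hAinv, ← mulVec_mulVec (S *ᵥ z) S⁻¹ S⁻¹, mulVec_mulVec z S⁻¹ S,
      Matrix.nonsing_inv_mul S hSdet, one_mulVec]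
  rw [key, Matrix.dotProduct_mulVec, ← Matrix.mulVec_transpose,
    Matrix.transpose_nonsing_inv, hSsym, mulVec_mulVec, Matrix.nonsing_inv_mul S hSdet,
    one_mulVec]

lemma sqrt_det_facts :
    hA.posSemidef.sqrt.det ≠ 0 ∧ |hA.posSemidef.sqrt.det| = A.det ^ ((1:ℝ)/2) := by
  set S := hA.posSemidef.sqrt with hS
  have hSS : S * S = A := hA.posSemidef.sqrt_mul_self
  have h2 : S.det * S.det = A.det := by rw [← det_mul, hSS]
  have hd : S.det ≠ 0 := fun h => by simp [h] at h2; exact hA.det_pos.ne' h2.symm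
  refine ⟨hd, ?_⟩
  have : |S.det| = Real.sqrt (A.det) := by
    rw [← h2, ← sq, Real.sqrt_sq_eq_abs]
  rw [this, Real.sqrt_eq_rpow]

lemma gaussianDensity_integral : ∫ y, gaussianDensity A y = 1 := by
  obtain ⟨hSdet, hSabs⟩ := sqrt_det_facts hA hAsymm
  rw [integral_comp_mulVec _ hSdet]
  have hcomp : ∀ z, gaussianDensity A (hA.posSemidef.sqrt.mulVec z)
      = (2 * π) ^ (-(d : ℝ) / 2) * A.det ^ (-(1 : ℝ) / 2) * Real.exp (-(z ⬝ᵥ z) / 2) := by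
    intro z
    rw [gaussianDensity, sqrt_quad hA hAsymm]
  simp_rw [hcomp]
  rw [integral_const_mul, gauss_std_integral, hSabs]
  have h2π : (0:ℝ) < 2 * π := by positivity
  have hsq : Real.sqrt (2*π) ^ d = (2*π) ^ ((d:ℝ)/2) := by
    rw [Real.sqrt_eq_rpow, ← Real.rpow_natCast ((2*π) ^ ((1:ℝ)/2)) d,
      ← Real.rpow_mul h2π.le]
    norm_num
    ring_nf
  rw [hsq]
  have e1 : (2*π:ℝ) ^ (-(d:ℝ)/2) * (2*π) ^ ((d:ℝ)/2) = 1 := by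
    rw [← Real.rpow_add h2π, show -(d:ℝ)/2 + (d:ℝ)/2 = 0 by ring, Real.rpow_zero]
  have e2 : A.det ^ ((1:ℝ)/2) * A.det ^ (-(1:ℝ)/2) = 1 := by
    rw [← Real.rpow_add hA.det_pos, show (1:ℝ)/2 + -(1:ℝ)/2 = 0 by ring, Real.rpow_zero]
  calc A.det ^ ((1:ℝ)/2) * ((2 * π) ^ (-(d:ℝ)/2) * A.det ^ (-(1:ℝ)/2) * (2*π) ^ ((d:ℝ)/2))
      = (A.det ^ ((1:ℝ)/2) * A.det ^ (-(1:ℝ)/2))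
        * ((2*π) ^ (-(d:ℝ)/2) * (2*π) ^ ((d:ℝ)/2)) := by ring
    _ = 1 := by rw [e1, e2, mul_one]

lemma gaussianDensity_integrable : Integrable (gaussianDensity A) := by
  obtain ⟨hSdet, _⟩ := sqrt_det_facts hA hAsymm
  refine integrable_of_comp_mulVec _ hSdet _ ?_
  have hcomp : ∀ z, gaussianDensity A (hA.posSemidef.sqrt.mulVec z)
      = (2 * π) ^ (-(d : ℝ) / 2) * A.det ^ (-(1 : ℝ) / 2) * Real.exp (-(z ⬝ᵥ z) / 2) := by
    intro z
    rw [gaussianDensity, sqrt_quad hA hAsymm]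
  simp_rw [hcomp]
  exact gauss_std_integrable.const_mul _

lemma gaussianDensity_nonneg (y : Fin d → ℝ) : 0 ≤ gaussianDensity A y := by
  have := hA.det_pos
  unfold gaussianDensity
  positivity

lemma translation_identity (b : Fin d → ℝ) (y : Fin d → ℝ) :
    Real.exp (-(b ⬝ᵥ y)) * gaussianDensity A y
      = Real.exp (b ⬝ᵥ A.mulVec b / 2) * gaussianDensity A (y + A.mulVec b) := by
  have hdet : IsUnit A.det := hA.det_pos.ne'.isUnit
  have hinv : A⁻¹.mulVec (A.mulVec b) = b := by
    rw [mulVec_mulVec, Matrix.nonsing_inv_mul A hdet, one_mulVec]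
  have hsymminv : A⁻¹ᵀ = A⁻¹ := by rw [Matrix.transpose_nonsing_inv, hAsymm.eq]
  have cross2 : (A.mulVec b) ⬝ᵥ A⁻¹.mulVec y = b ⬝ᵥ y := by
    rw [Matrix.dotProduct_mulVec, ← Matrix.mulVec_transpose, hsymminv, hinv]
  have cross1 : y ⬝ᵥ A⁻¹.mulVec (A.mulVec b) = b ⬝ᵥ y := by
    rw [hinv, dotProduct_comm]
  have last : (A.mulVec b) ⬝ᵥ A⁻¹.mulVec (A.mulVec b) = b ⬝ᵥ A.mulVec b := by
    rw [hinv, dotProduct_comm]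
  have hquad : (y + A.mulVec b) ⬝ᵥ A⁻¹.mulVec (y + A.mulVec b)
      = y ⬝ᵥ A⁻¹.mulVec y + 2*(b ⬝ᵥ y) + b ⬝ᵥ A.mulVec b := by
    rw [mulVec_add, dotProduct_add, add_dotProduct, add_dotProduct, cross1, cross2, last]
    ring
  have hexp : Real.exp (-(b ⬝ᵥ y)) * Real.exp (-(y ⬝ᵥ A⁻¹.mulVec y) / 2)
      = Real.exp (b ⬝ᵥ A.mulVec b / 2)
        * Real.exp (-((y + A.mulVec b) ⬝ᵥ A⁻¹.mulVec (y + A.mulVec b)) / 2) := by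
    rw [← Real.exp_add, ← Real.exp_add, hquad]
    congr 1
    ring
  unfold gaussianDensity
  calc Real.exp (-(b ⬝ᵥ y))
        * ((2 * π) ^ (-(d:ℝ)/2) * A.det ^ (-(1:ℝ)/2) * Real.exp (-(y ⬝ᵥ A⁻¹.mulVec y) / 2))
      = (2 * π) ^ (-(d:ℝ)/2) * A.det ^ (-(1:ℝ)/2)
        * (Real.exp (-(b ⬝ᵥ y)) * Real.exp (-(y ⬝ᵥ A⁻¹.mulVec y) / 2)) := by ring
    _ = (2 * π) ^ (-(d:ℝ)/2) * A.det ^ (-(1:ℝ)/2)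
        * (Real.exp (b ⬝ᵥ A.mulVec b / 2)
          * Real.exp (-((y + A.mulVec b) ⬝ᵥ A⁻¹.mulVec (y + A.mulVec b)) / 2)) := by rw [hexp]
    _ = Real.exp (b ⬝ᵥ A.mulVec b / 2)
        * ((2 * π) ^ (-(d:ℝ)/2) * A.det ^ (-(1:ℝ)/2)
          * Real.exp (-((y + A.mulVec b) ⬝ᵥ A⁻¹.mulVec (y + A.mulVec b)) / 2)) := by ring

end Main
end GaussAux

theorem smoothed_minus_unsmoothed_ratio_bound {d : ℕ}
    (fhat : (Fin d → ℝ) → ℝ) (A : Matrix (Fin d) (Fin d) ℝ)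
    (hA : A.PosDef) (hAsymm : A.IsSymm)
    (hfhat0 : ∀ x, 0 ≤ fhat x) (hfhatmeas : Measurable fhat)
    (hfhat1 : ∫ x, fhat x = 1)
    (Cj : Set (Fin d → ℝ)) (b : Fin d → ℝ) (β : ℝ)
    (ftil : (Fin d → ℝ) → ℝ)
    (hftil : ∀ x, ftil x = ∫ y, fhat (x - y) * gaussianDensity A y)
    (x : Fin d → ℝ) (hx : x ∈ Cj)
    (hval : fhat x = Real.exp (b ⬝ᵥ x - β))
    (hbound : ∀ y : Fin d → ℝ, fhat (x - y) ≤ Real.exp (b ⬝ᵥ (x - y) - β)) :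
    (ftil x - fhat x) / fhat x ≤ Real.exp (b ⬝ᵥ A.mulVec b / 2) - 1 := by
  set q : ℝ := b ⬝ᵥ A.mulVec b / 2 with hq
  have hfx : 0 < fhat x := by rw [hval]; exact Real.exp_pos _
  -- pointwise rewriting of the dominating function
  have hdom : ∀ y : Fin d → ℝ, Real.exp (b ⬝ᵥ (x - y) - β) * gaussianDensity A y
      = (Real.exp (b ⬝ᵥ x - β) * Real.exp q) * gaussianDensity A (y + A.mulVec b) := by
    intro y
    have h1 : b ⬝ᵥ (x - y) - β = (b ⬝ᵥ x - β) + (-(b ⬝ᵥ y)) := by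
      rw [dotProduct_sub]; ring
    rw [h1, Real.exp_add, mul_assoc, GaussAux.translation_identity hA hAsymm b y, mul_assoc]
  have hIntShift : Integrable (fun y => gaussianDensity A (y + A.mulVec b)) :=
    (GaussAux.gaussianDensity_integrable hA hAsymm).comp_add_right (A.mulVec b)
  have hIntDom : Integrable (fun y => Real.exp (b ⬝ᵥ (x - y) - β) * gaussianDensity A y) := by
    simp_rw [hdom]
    exact hIntShift.const_mul _
  have hle : ftil x ≤ Real.exp (b ⬝ᵥ x - β) * Real.exp q := by
    rw [hftil x]
    calc ∫ y, fhat (x - y) * gaussianDensity A y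
        ≤ ∫ y, Real.exp (b ⬝ᵥ (x - y) - β) * gaussianDensity A y := by
          refine integral_mono_of_nonneg (Filter.Eventually.of_forall fun y => ?_) hIntDom
            (Filter.Eventually.of_forall fun y => ?_)
          · exact mul_nonneg (hfhat0 _) (GaussAux.gaussianDensity_nonneg hA hAsymm y)
          · exact mul_le_mul_of_nonneg_right (hbound y)
              (GaussAux.gaussianDensity_nonneg hA hAsymm y)
      _ = (Real.exp (b ⬝ᵥ x - β) * Real.exp q) * ∫ y, gaussianDensity A (y + A.mulVec b) := by
          simp_rw [hdom]
          rw [integral_const_mul]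
      _ = Real.exp (b ⬝ᵥ x - β) * Real.exp q := by
          rw [integral_add_right_eq_self (gaussianDensity A) (A.mulVec b),
            GaussAux.gaussianDensity_integral hA hAsymm, mul_one]
  rw [div_le_iff₀ hfx]
  have : ftil x ≤ Real.exp q * fhat x := by rw [hval]; linarith [hle]
  nlinarith [hfx]
end

section
/- Let f be an upper semi-continuous log-concave density on ℝ^d. Then there exist a₀ > 0 and b₀ ∈ ℝ such that f(x) ≤ exp(-a₀‖x‖ + b₀) for all x ∈ ℝ^d. -/
open MeasureTheory

/-- A log-concave function on `ℝ^d` (multiplicative form). -/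
def LogConcaveFn {d : ℕ} (f : (Fin d → ℝ) → ℝ) : Prop :=
  (∀ x, 0 ≤ f x) ∧
    ∀ x y : Fin d → ℝ, ∀ t : ℝ, 0 ≤ t → t ≤ 1 →
      f x ^ t * f y ^ (1 - t) ≤ f (t • x + (1 - t) • y)

open Metric Bornology Set
open scoped ENNReal

/-- A convex set of finite volume containing a ball is bounded. -/
lemma aux_convex_bounded_of_measure_ne_top {d : ℕ} {C : Set (Fin d → ℝ)}
    (hconv : Convex ℝ C) (hfin : volume C ≠ ⊤) {x₀ : Fin d → ℝ} {r : ℝ}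
    (hr : 0 < r) (hball : ball x₀ r ⊆ C) : IsBounded C := by
  by_contra hub
  set v := volume (ball (0 : Fin d → ℝ) (r/2)) with hv
  have hv0 : 0 < v := measure_ball_pos _ _ (by linarith)
  have key : ∀ N : ℕ, (N : ℝ≥0∞) * v ≤ volume C := by
    intro N
    have hnb : ¬ C ⊆ closedBall x₀ (2*(N+1)*r) := fun h => hub (isBounded_closedBall.subset h)
    obtain ⟨z, hzC, hz⟩ : ∃ z ∈ C, z ∉ closedBall x₀ (2*(N+1)*r) := by
      simpa [Set.subset_def] using hnb
    rw [mem_closedBall, not_le] at hz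
    set s : ℝ := dist z x₀ with hs
    have hsn : s = ‖z - x₀‖ := dist_eq_norm _ _
    have hs0 : (0:ℝ) < s := lt_of_le_of_lt (by positivity) hz
    have hsN : 2 * (N:ℝ) * r ≤ s := by
      have : (0:ℝ) ≤ r := hr.le
      nlinarith [hz]
    set c : ℕ → (Fin d → ℝ) := fun k => x₀ + ((k * r)/s) • (z - x₀) with hc
    have hsub : ∀ k : ℕ, k ≤ N → ball (c k) (r/2) ⊆ C := by
      intro k hk p hp
      set t : ℝ := (k * r)/s with htdef
      have ht0 : 0 ≤ t := by positivity
      have ht2 : t ≤ 1/2 := by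
        rw [htdef, div_le_iff₀ hs0]
        have : (k:ℝ) * r ≤ N * r := by
          have : (k:ℝ) ≤ N := by exact_mod_cast hk
          nlinarith
        nlinarith
      have h1t : (0:ℝ) < 1 - t := by linarith
      have hck : c k = t • z + (1 - t) • x₀ := by
        rw [hc]
        simp only [smul_sub, sub_smul, one_smul]
        abel
      set b : Fin d → ℝ := (1/(1-t)) • (p - t • z) with hb
      have hbmem : b ∈ ball x₀ r := by
        rw [mem_ball, dist_eq_norm]
        have hkey : (1 - t) • (b - x₀) = p - c k := by
          rw [hb, hck, smul_sub, smul_smul, mul_one_div, div_self h1t.ne', one_smul]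
          abel
        have h1 : ‖p - c k‖ = (1 - t) * ‖b - x₀‖ := by
          rw [← hkey, norm_smul, Real.norm_eq_abs, abs_of_pos h1t]
        have h2 : ‖p - c k‖ < r/2 := by rw [← dist_eq_norm]; exact hp
        nlinarith [norm_nonneg (b - x₀)]
      have hpeq : p = t • z + (1 - t) • b := by
        rw [hb, smul_smul, mul_one_div, div_self h1t.ne', one_smul]
        abel
      rw [hpeq]
      exact hconv hzC (hball hbmem) ht0 h1t.le (by ring)
    have hdisj : (↑(Finset.range (N)) : Set ℕ).PairwiseDisjoint
        (fun k => ball (c k) (r/2)) := by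
      intro i _ j _ hij
      apply Set.disjoint_left.mpr
      intro p hpi hpj
      have hdij : dist (c i) (c j) = |(i:ℝ) - j| * r := by
        rw [dist_eq_norm, hc]
        have : (x₀ + ((i * r)/s) • (z - x₀)) - (x₀ + ((j * r)/s) • (z - x₀))
            = (((i:ℝ) - j) * r / s) • (z - x₀) := by
          module
        rw [this, norm_smul, Real.norm_eq_abs, ← hsn, abs_div, abs_of_pos hs0,
          div_mul_eq_mul_div, div_eq_iff hs0.ne', abs_mul, abs_of_pos hr]
      have hge : r ≤ dist (c i) (c j) := by
        rw [hdij]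
        have h1 : (1:ℤ) ≤ |(i:ℤ) - (j:ℤ)| :=
          Int.one_le_abs (sub_ne_zero.mpr (by exact_mod_cast hij))
        have : (1:ℝ) ≤ |(i:ℝ) - j| := by exact_mod_cast h1
        nlinarith
      have : dist (c i) (c j) < r := by
        calc dist (c i) (c j) ≤ dist (c i) p + dist p (c j) := dist_triangle _ _ _
          _ < r/2 + r/2 := by
              rw [mem_ball, dist_comm] at hpi
              rw [mem_ball] at hpj
              exact add_lt_add hpi hpj
          _ = r := by ring
      linarith
    calc (N : ℝ≥0∞) * v = ∑ k ∈ Finset.range N, volume (ball (c k) (r/2)) := by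
          rw [Finset.sum_congr rfl (fun k _ => Measure.addHaar_ball_center volume (c k) (r/2))]
          simp [Finset.sum_const, nsmul_eq_mul, hv]
      _ = volume (⋃ k ∈ Finset.range N, ball (c k) (r/2)) :=
          (measure_biUnion_finset hdisj (fun k _ => measurableSet_ball)).symm
      _ ≤ volume C := measure_mono (by
          refine Set.iUnion₂_subset fun k hk => hsub k ?_
          exact (Finset.mem_range.mp hk).le)
  have hne : volume C / v ≠ ⊤ := (ENNReal.div_lt_top hfin hv0.ne').ne
  obtain ⟨n, hn⟩ := ENNReal.exists_nat_gt hne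
  exact hn.not_ge ((ENNReal.le_div_iff_mul_le (Or.inl hv0.ne') (Or.inr hfin)).mpr (key n))

/-- Superlevel sets of a log-concave function are convex. -/
lemma aux_logconcave_superlevel_convex {d : ℕ} {f : (Fin d → ℝ) → ℝ} (hlc : LogConcaveFn f)
    {δ : ℝ} (hδ : 0 < δ) : Convex ℝ {x | δ ≤ f x} := by
  intro x hx y hy a b ha hb hab
  have hb' : b = 1 - a := by linarith
  subst hb'
  have hx' : δ ≤ f x := hx
  have hy' : δ ≤ f y := hy
  have key := hlc.2 x y a ha (by linarith)
  have : δ ≤ f (a • x + (1 - a) • y) := by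
    calc δ = δ ^ a * δ ^ (1 - a) := by
          rw [← Real.rpow_add hδ]; simp
      _ ≤ f x ^ a * f y ^ (1 - a) :=
          mul_le_mul (Real.rpow_le_rpow hδ.le hx' ha)
            (Real.rpow_le_rpow hδ.le hy' (by linarith))
            (Real.rpow_nonneg hδ.le _) (Real.rpow_nonneg (le_trans hδ.le hx') _)
      _ ≤ f (a • x + (1 - a) • y) := key
  exact this

/-- A convex set of positive volume contains a ball. -/
lemma aux_exists_ball_subset_of_convex_measure_pos {d : ℕ} {C : Set (Fin d → ℝ)}
    (hconv : Convex ℝ C) (hpos : volume C ≠ 0) :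
    ∃ x₀ ∈ C, ∃ r > 0, ball x₀ r ⊆ C := by
  have hint : (interior C).Nonempty := by
    by_contra h
    rw [Set.not_nonempty_iff_eq_empty] at h
    have hspan : affineSpan ℝ C ≠ ⊤ := by
      intro htop
      rw [← hconv.interior_nonempty_iff_affineSpan_eq_top] at htop
      rw [h] at htop
      exact Set.not_nonempty_empty htop
    exact hpos (measure_mono_null (subset_affineSpan ℝ C)
      (Measure.addHaar_affineSubspace volume _ hspan))
  obtain ⟨x₀, hx₀⟩ := hint
  obtain ⟨r, hr, hball⟩ := Metric.isOpen_iff.mp isOpen_interior x₀ hx₀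
  exact ⟨x₀, interior_subset hx₀, r, hr, hball.trans interior_subset⟩

/-- A nonnegative function with integral one has some superlevel set of positive measure. -/
lemma aux_exists_pos_level {d : ℕ} (f : (Fin d → ℝ) → ℝ) (hf0 : ∀ x, 0 ≤ f x)
    (hint : ∫ x, f x = 1) :
    ∃ δ : ℝ, 0 < δ ∧ volume {x | δ ≤ f x} ≠ 0 := by
  by_contra h
  push_neg at h
  have hnull : volume {x | 0 < f x} = 0 := by
    refine measure_mono_null (fun x hx => ?_)
      (measure_iUnion_null (s := fun n : ℕ => {x | 1/((n:ℝ)+1) ≤ f x})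
        fun n => h _ (by positivity))
    obtain ⟨n, hn⟩ := exists_nat_one_div_lt (show (0:ℝ) < f x from hx)
    exact mem_iUnion.mpr ⟨n, hn.le⟩
  have hae : f =ᵐ[volume] 0 := by
    rw [Filter.eventuallyEq_iff_exists_mem]
    refine ⟨{x | ¬ 0 < f x}, ?_, fun x hx => le_antisymm (not_lt.mp hx) (hf0 x)⟩
    rw [mem_ae_iff, show {x | ¬ 0 < f x}ᶜ = {x | 0 < f x} from by ext x; simp]
    exact hnull
  rw [integral_congr_ae hae] at hint
  simp at hint

/-- Global bound for a log-concave density bounded below on a ball. -/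
lemma aux_global_bound {d : ℕ} (f : (Fin d → ℝ) → ℝ) (hlc : LogConcaveFn f)
    (hintg : Integrable f) (hint : ∫ x, f x = 1)
    {δ r : ℝ} {x₀ : Fin d → ℝ} (hδ0 : 0 < δ) (hr : 0 < r)
    (hball : ball x₀ r ⊆ {x | δ ≤ f x}) :
    ∀ y, f y ≤ 1 / (δ * ((volume (ball x₀ (r/2))).toReal)^2) := by
  set v' : ℝ := (volume (ball x₀ (r/2))).toReal with hv'
  have hv'0 : 0 < v' :=
    ENNReal.toReal_pos (measure_ball_pos _ _ (by linarith)).ne' measure_ball_lt_top.ne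
  intro y
  set c' : Fin d → ℝ := (1/2 : ℝ) • y + (1/2 : ℝ) • x₀ with hc'
  set B' : Set (Fin d → ℝ) := ball c' (r/2) with hB'
  have hlow : ∀ p ∈ B', Real.sqrt (f y) * Real.sqrt δ ≤ f p := by
    intro p hp
    set b : Fin d → ℝ := (2:ℝ) • p - y with hb
    have hbmem : b ∈ ball x₀ r := by
      rw [mem_ball, dist_eq_norm]
      have h1 : b - x₀ = (2:ℝ) • (p - c') := by rw [hb, hc']; module
      have h2 : ‖p - c'‖ < r/2 := by rw [← dist_eq_norm]; exact hp
      rw [h1, norm_smul]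
      simp only [Real.norm_ofNat]
      linarith
    have hpeq : p = (1/2 : ℝ) • y + (1 - (1/2 : ℝ)) • b := by
      rw [hb]; norm_num; module
    have hkey := hlc.2 y b (1/2) (by norm_num) (by norm_num)
    rw [← hpeq] at hkey
    have hfb : δ ≤ f b := hball hbmem
    calc Real.sqrt (f y) * Real.sqrt δ
        ≤ Real.sqrt (f y) * Real.sqrt (f b) :=
          mul_le_mul_of_nonneg_left (Real.sqrt_le_sqrt hfb) (Real.sqrt_nonneg _)
      _ = f y ^ ((1:ℝ)/2) * f b ^ (1 - (1:ℝ)/2) := by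
          rw [Real.sqrt_eq_rpow, Real.sqrt_eq_rpow]; norm_num
      _ ≤ f p := hkey
  have hμB' : (volume B').toReal = v' := by
    rw [hB', hv', Measure.addHaar_ball_center volume c', Measure.addHaar_ball_center volume x₀]
  have hlb := setIntegral_ge_of_const_le_real (μ := volume) measurableSet_ball
    measure_ball_lt_top.ne hlow hintg.integrableOn
  have hub : ∫ p in B', f p ≤ 1 := by
    rw [← hint]
    exact setIntegral_le_integral hintg (Filter.Eventually.of_forall hlc.1)
  rw [← hB', measureReal_def, hμB'] at hlb
  have habc : Real.sqrt (f y) * Real.sqrt δ * v' ≤ 1 := le_trans hlb hub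
  rw [le_div_iff₀ (by positivity)]
  have h1 : Real.sqrt (f y) ^ 2 = f y := Real.sq_sqrt (hlc.1 y)
  have h2 : Real.sqrt δ ^ 2 = δ := Real.sq_sqrt hδ0.le
  have hnn : 0 ≤ Real.sqrt (f y) * Real.sqrt δ * v' :=
    mul_nonneg (mul_nonneg (Real.sqrt_nonneg (f y)) (Real.sqrt_nonneg δ)) hv'0.le
  have hsq := mul_le_mul habc habc hnn zero_le_one
  have heq : f y * (δ * v' ^ 2) =
      (Real.sqrt (f y) * Real.sqrt δ * v') * (Real.sqrt (f y) * Real.sqrt δ * v') := by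
    linear_combination (δ * v' ^ 2) * h1.symm + (Real.sqrt (f y) ^ 2 * v' ^ 2) * h2.symm
  linarith [hsq]

/-- Exponential decay away from the center. -/
lemma aux_decay {d : ℕ} (f : (Fin d → ℝ) → ℝ) (hlc : LogConcaveFn f)
    {δ T : ℝ} {x₀ : Fin d → ℝ} (hδ0 : 0 < δ) (hT : 0 < T)
    (hfx₀ : δ ≤ f x₀) (hout : ∀ z, ‖z - x₀‖ = T → f z ≤ δ/2) :
    ∀ x, T ≤ ‖x - x₀‖ → f x ≤ δ * Real.exp (-(Real.log 2 / T) * ‖x - x₀‖) := by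
  intro x hx
  set s : ℝ := ‖x - x₀‖ with hs
  have hs0 : 0 < s := lt_of_lt_of_le hT hx
  set t : ℝ := T / s with ht
  have ht0 : 0 < t := by positivity
  have ht1 : t ≤ 1 := by rw [ht, div_le_one hs0]; exact hx
  set z : Fin d → ℝ := t • x + (1 - t) • x₀ with hz
  have hzd : ‖z - x₀‖ = T := by
    have : z - x₀ = t • (x - x₀) := by rw [hz]; module
    rw [this, norm_smul, Real.norm_eq_abs, abs_of_pos ht0, ← hs, ht,
      div_mul_cancel₀ _ hs0.ne']
  have hfz : f z ≤ δ/2 := hout z hzd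
  have chain := hlc.2 x x₀ t ht0.le ht1
  rw [← hz] at chain
  have h1 : f x ^ t * δ ^ (1 - t) ≤ δ/2 := by
    calc f x ^ t * δ ^ (1 - t) ≤ f x ^ t * f x₀ ^ (1 - t) :=
          mul_le_mul_of_nonneg_left (Real.rpow_le_rpow hδ0.le hfx₀ (by linarith))
            (Real.rpow_nonneg (hlc.1 x) _)
      _ ≤ f z := chain
      _ ≤ δ/2 := hfz
  have hmul : δ ^ t * δ ^ (1 - t) = δ := by
    rw [← Real.rpow_add hδ0]; norm_num
  have h2 : f x ^ t ≤ δ ^ t / 2 := by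
    have hpos : 0 < δ ^ (1 - t) := Real.rpow_pos_of_pos hδ0 _
    have := h1.trans_eq (by rw [div_mul_eq_mul_div, hmul] :
      (δ/2 : ℝ) = (δ ^ t / 2) * δ ^ (1 - t))
    exact le_of_mul_le_mul_right this hpos
  have hrhs : (δ * Real.exp (-(Real.log 2 / T) * s)) ^ t = δ ^ t / 2 := by
    rw [Real.mul_rpow hδ0.le (Real.exp_pos _).le, ← Real.exp_mul]
    have : -(Real.log 2 / T) * s * t = -Real.log 2 := by
      rw [ht]; field_simp
    rw [this, Real.exp_neg, Real.exp_log (by norm_num : (0:ℝ) < 2)]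
    ring
  rw [← Real.rpow_le_rpow_iff (hlc.1 x) (by positivity) ht0, hrhs]
  exact h2

theorem logConcave_density_exponential_tail {d : ℕ}
    (f : (Fin d → ℝ) → ℝ) (husc : UpperSemicontinuous f)
    (hlc : LogConcaveFn f) (hmeas : Measurable f) (hint : ∫ x, f x = 1) :
    ∃ a₀ > 0, ∃ b₀ : ℝ, ∀ x, f x ≤ Real.exp (-a₀ * ‖x‖ + b₀) := by
  have hf0 := hlc.1
  have hintg : Integrable f := by
    by_contra h
    rw [integral_undef h] at hint; norm_num at hint
  obtain ⟨δ, hδ0, hδpos⟩ := aux_exists_pos_level f hf0 hint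
  have hCconv : Convex ℝ {x | δ ≤ f x} := aux_logconcave_superlevel_convex hlc hδ0
  have hC'conv : Convex ℝ {x | δ/2 ≤ f x} :=
    aux_logconcave_superlevel_convex hlc (by linarith)
  obtain ⟨x₀, hx₀C, r, hr, hball⟩ := aux_exists_ball_subset_of_convex_measure_pos hCconv hδpos
  have hCC' : {x | δ ≤ f x} ⊆ {x | δ/2 ≤ f x} := fun x hx => by
    have : δ ≤ f x := hx
    show δ/2 ≤ f x
    linarith
  have hball' : ball x₀ r ⊆ {x | δ/2 ≤ f x} := hball.trans hCC'
  have hC'fin : volume {x | δ/2 ≤ f x} ≠ ⊤ :=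
    (hintg.measure_ge_lt_top (by linarith)).ne
  have hbdd : IsBounded {x | δ/2 ≤ f x} :=
    aux_convex_bounded_of_measure_ne_top hC'conv hC'fin hr hball'
  obtain ⟨R, hR⟩ := hbdd.subset_closedBall x₀
  set T : ℝ := max R 0 + 1 with hT
  have hT0 : 0 < T := by positivity
  have hout : ∀ z, ‖z - x₀‖ = T → f z ≤ δ/2 := by
    intro z hzd
    by_contra h
    push_neg at h
    have hzC' : z ∈ {x | δ/2 ≤ f x} := h.le
    have h2 := hR hzC'
    rw [mem_closedBall, dist_eq_norm, hzd] at h2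
    have : T ≤ max R 0 := h2.trans (le_max_left _ _)
    linarith
  have hfx₀ : δ ≤ f x₀ := hx₀C
  set v' : ℝ := (volume (ball x₀ (r/2))).toReal with hv'
  have hv'0 : 0 < v' :=
    ENNReal.toReal_pos (measure_ball_pos _ _ (by linarith)).ne' measure_ball_lt_top.ne
  have hM := aux_global_bound f hlc hintg hint hδ0 hr hball
  set M₀ : ℝ := 1/(δ * v'^2) with hM₀
  have hM₀pos : 0 < M₀ := by positivity
  have hδM : δ ≤ M₀ := le_trans hfx₀ (hM x₀)
  set a₀ : ℝ := Real.log 2 / T with ha₀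
  have ha₀0 : 0 < a₀ := div_pos (Real.log_pos (by norm_num)) hT0
  have hfar := aux_decay f hlc hδ0 hT0 hfx₀ hout
  refine ⟨a₀, ha₀0, Real.log M₀ + a₀ * T + a₀ * ‖x₀‖, fun x => ?_⟩
  have hsplit : ‖x‖ - ‖x₀‖ ≤ ‖x - x₀‖ := norm_sub_norm_le x x₀
  have hkey : a₀ * (‖x‖ - ‖x₀‖) ≤ a₀ * ‖x - x₀‖ :=
    mul_le_mul_of_nonneg_left hsplit ha₀0.le
  rcases le_or_gt T ‖x - x₀‖ with hcase | hcase
  · have h1 := hfar x hcase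
    have hTle : a₀ * T ≥ 0 := mul_nonneg ha₀0.le hT0.le
    calc f x ≤ δ * Real.exp (-(Real.log 2 / T) * ‖x - x₀‖) := h1
      _ = δ * Real.exp (-a₀ * ‖x - x₀‖) := by rw [ha₀]
      _ ≤ M₀ * Real.exp (-a₀ * ‖x - x₀‖) :=
          mul_le_mul_of_nonneg_right hδM (Real.exp_pos _).le
      _ = Real.exp (Real.log M₀ + -a₀ * ‖x - x₀‖) := by
          rw [Real.exp_add, Real.exp_log hM₀pos]
      _ ≤ Real.exp (-a₀ * ‖x‖ + (Real.log M₀ + a₀ * T + a₀ * ‖x₀‖)) := by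
          apply Real.exp_le_exp.mpr
          nlinarith [hkey, hTle]
  · have h1 : f x ≤ M₀ := hM x
    have hkey2 : a₀ * (‖x‖ - ‖x₀‖) ≤ a₀ * T :=
      mul_le_mul_of_nonneg_left (hsplit.trans hcase.le) ha₀0.le
    calc f x ≤ M₀ := h1
      _ = Real.exp (Real.log M₀) := (Real.exp_log hM₀pos).symm
      _ ≤ Real.exp (-a₀ * ‖x‖ + (Real.log M₀ + a₀ * T + a₀ * ‖x₀‖)) := by
          apply Real.exp_le_exp.mpr
          nlinarith [hkey2]
end
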